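/- For all positive real numbers r and s, (1/2) ∫_0^{2π} log(r² + s² − 2 r s cos θ) dθ = 2π · log(max(r, s)). (Newton's theorem for the logarithmic kernel in two dimensions.) -/

import Mathlib

open Real

section NlkAux

open Set MeasureTheory intervalIntegral Filter Topology

/-- The integrand `log (1 - 2x cos θ + x²)`. -/
noncomputable def nlkF (x θ : ℝ) : ℝ := Real.log (1 - 2*x*Real.cos θ + x^2)

/-- The integral `∫ θ in 0..2π, log (1 - 2x cos θ + x²)`. -/
noncomputable def nlkI (x : ℝ) : ℝ := ∫ θ in (0:ℝ)..(2*π), nlkF x θ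

/-- Dominating function for the singular case. -/
noncomputable def nlkG (θ : ℝ) : ℝ :=
  Real.log 4 + Real.log (2*π^4) + 4*θ^(-(1/2):ℝ) + 4*(2*π-θ)^(-(1/2):ℝ)

lemma nlk_pos {x : ℝ} (h1 : -1 < x) (h2 : x < 1) (θ : ℝ) :
    0 < 1 - 2*x*Real.cos θ + x^2 := by
  have hb : x * Real.cos θ ≤ |x| := (le_abs_self _).trans (by
    rw [abs_mul]; exact mul_le_of_le_one_right (abs_nonneg x) (Real.abs_cos_le_one θ))
  have h0 : 0 < 1 - |x| := by
    have := abs_lt.mpr ⟨h1, h2⟩; linarith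
  nlinarith [sq_abs x, mul_pos h0 h0]

lemma nlk_cont {x : ℝ} (h1 : -1 < x) (h2 : x < 1) : Continuous (nlkF x) := by
  apply Continuous.log
  · continuity
  · exact fun θ => (nlk_pos h1 h2 θ).ne'

lemma nlk_periodic (x : ℝ) : Function.Periodic (nlkF x) (2*π) := by
  intro θ; unfold nlkF; rw [Real.cos_add_two_pi]

lemma nlk_intInt {x : ℝ} (h1 : -1 < x) (h2 : x < 1) (a b : ℝ) :
    IntervalIntegrable (nlkF x) volume a b :=
  (nlk_cont h1 h2).intervalIntegrable a b

lemma nlk_neg {x : ℝ} : nlkI (-x) = nlkI x := by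
  have key : ∀ θ, nlkF (-x) θ = nlkF x (θ + π) := by
    intro θ; unfold nlkF; rw [Real.cos_add_pi]; ring_nf
  unfold nlkI
  rw [intervalIntegral.integral_congr (g := fun θ => nlkF x (θ + π))
    (fun θ _ => key θ)]
  rw [intervalIntegral.integral_comp_add_right (fun θ => nlkF x θ) π]
  have := (nlk_periodic x).intervalIntegral_add_eq π 0
  rw [zero_add] at this
  rw [show (0:ℝ) + π = π by ring, show 2*π + π = π + 2*π by ring, this]

lemma nlk_double {x : ℝ} (h1 : -1 < x) (h2 : x < 1) : nlkI (x^2) = 2 * nlkI x := by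
  have hx2a : -1 < x^2 := by nlinarith
  have hx2b : x^2 < 1 := by nlinarith
  have key : ∀ θ, nlkF x θ + nlkF (-x) θ = nlkF (x^2) (2*θ) := by
    intro θ
    unfold nlkF
    rw [← Real.log_mul (nlk_pos h1 h2 θ).ne' (by
      have := nlk_pos (by linarith : -1 < -x) (by linarith : -x < 1) θ
      nlinarith)]
    rw [Real.cos_two_mul]
    ring_nf
  have step1 : nlkI x + nlkI (-x) = ∫ θ in (0:ℝ)..(2*π), nlkF (x^2) (2*θ) := by
    unfold nlkI
    rw [← intervalIntegral.integral_add (nlk_intInt h1 h2 0 (2*π))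
      (nlk_intInt (by linarith) (by linarith) 0 (2*π))]
    exact intervalIntegral.integral_congr (fun θ _ => key θ)
  have step2 : (∫ θ in (0:ℝ)..(2*π), nlkF (x^2) (2*θ)) = nlkI (x^2) := by
    rw [intervalIntegral.integral_comp_mul_left (fun θ => nlkF (x^2) θ) two_ne_zero]
    rw [mul_zero]
    have hadj : (∫ θ in (0:ℝ)..(2*(2*π)), nlkF (x^2) θ)
        = (∫ θ in (0:ℝ)..(2*π), nlkF (x^2) θ) + ∫ θ in (2*π)..(2*(2*π)), nlkF (x^2) θ := by
      rw [intervalIntegral.integral_add_adjacent_intervals (nlk_intInt hx2a hx2b _ _)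
        (nlk_intInt hx2a hx2b _ _)]
    have hper : (∫ θ in (2*π)..(2*(2*π)), nlkF (x^2) θ)
        = ∫ θ in (0:ℝ)..(2*π), nlkF (x^2) θ := by
      have := (nlk_periodic (x^2)).intervalIntegral_add_eq (2*π) 0
      rw [zero_add] at this
      rw [show 2*(2*π) = 2*π + 2*π by ring, this]
    rw [hadj, hper]
    unfold nlkI
    simp
    ring
  rw [← step2, ← step1, nlk_neg]; ring

lemma nlk_bound {x : ℝ} (hx : |x| ≤ 1/2) : |nlkI x| ≤ 2 * π * Real.log 4 := by
  have hb : ∀ θ ∈ Set.uIoc (0:ℝ) (2*π), ‖nlkF x θ‖ ≤ Real.log 4 := by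
    intro θ _
    have habs : |x * Real.cos θ| ≤ |x| := by
      rw [abs_mul]; exact mul_le_of_le_one_right (abs_nonneg x) (Real.abs_cos_le_one θ)
    have h := abs_le.mp habs
    have hv1 : (1/4:ℝ) ≤ 1 - 2*x*Real.cos θ + x^2 := by
      nlinarith [sq_abs x, abs_nonneg x]
    have hv2 : 1 - 2*x*Real.cos θ + x^2 ≤ 4 := by
      nlinarith [sq_abs x, abs_nonneg x]
    rw [Real.norm_eq_abs]
    show |Real.log (1 - 2*x*Real.cos θ + x^2)| ≤ Real.log 4
    rw [abs_le]
    constructor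
    · rw [← Real.log_inv]
      apply Real.log_le_log (by norm_num)
      rw [show (4:ℝ)⁻¹ = 1/4 by norm_num]; exact hv1
    · exact Real.log_le_log (by linarith) hv2
  have := intervalIntegral.norm_integral_le_of_norm_le_const hb
  rw [Real.norm_eq_abs] at this
  calc |nlkI x| ≤ Real.log 4 * |2*π - 0| := this
    _ = 2 * π * Real.log 4 := by
        rw [sub_zero, abs_of_pos (by positivity)]; ring

lemma nlk_vanish {x : ℝ} (hx0 : 0 ≤ x) (hx1 : x < 1) : nlkI x = 0 := by
  have iter : ∀ n : ℕ, nlkI (x^(2^n)) = 2^n * nlkI x := by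
    intro n
    induction n with
    | zero => simp
    | succ n ih =>
      have h1' : -1 < x^(2^n) := lt_of_lt_of_le (by norm_num) (pow_nonneg hx0 _)
      have h2' : x^(2^n) < 1 := pow_lt_one₀ hx0 hx1 (by positivity)
      rw [pow_succ, pow_mul, nlk_double h1' h2', ih]
      ring
  obtain ⟨N, hN⟩ : ∃ N : ℕ, x^(2^N) ≤ 1/2 := by
    have ht := tendsto_pow_atTop_nhds_zero_of_lt_one hx0 hx1
    have := (ht.eventually (eventually_le_nhds (by norm_num : (0:ℝ) < 1/2))).exists
    obtain ⟨n, hn⟩ := this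
    refine ⟨n, le_trans (pow_le_pow_of_le_one hx0 hx1.le (Nat.lt_two_pow_self (n := n)).le) hn⟩
  have hstep : ∀ k : ℕ, |nlkI x| ≤ (2 * π * Real.log 4) / 2^(N+k) := by
    intro k
    have hle : x^(2^(N+k)) ≤ 1/2 :=
      le_trans (pow_le_pow_of_le_one hx0 hx1.le
        (Nat.pow_le_pow_right (by norm_num) (Nat.le_add_right N k))) hN
    have habs : |x^(2^(N+k))| ≤ 1/2 := by
      rw [abs_of_nonneg (pow_nonneg hx0 _)]; exact hle
    have := nlk_bound habs
    rw [iter (N+k), abs_mul, abs_of_pos (by positivity : (0:ℝ) < (2:ℝ)^(N+k))] at this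
    rw [le_div_iff₀ (by positivity : (0:ℝ) < (2:ℝ)^(N+k))]
    linarith [this]
  have htend : Filter.Tendsto (fun k : ℕ => (2 * π * Real.log 4) / 2^(N+k))
      Filter.atTop (nhds 0) := by
    have : (fun k : ℕ => (2 * π * Real.log 4) / 2^(N+k))
        = fun k : ℕ => ((2 * π * Real.log 4)/2^N) * (1/2:ℝ)^k := by
      funext k; rw [pow_add]; field_simp; rw [← mul_pow]; norm_num
    rw [this]
    simpa using (tendsto_pow_atTop_nhds_zero_of_lt_one (by norm_num : (0:ℝ) ≤ 1/2)
      (by norm_num)).const_mul ((2 * π * Real.log 4)/2^N)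
  have h0 : |nlkI x| ≤ 0 := ge_of_tendsto' htend hstep
  exact abs_eq_zero.mp (le_antisymm h0 (abs_nonneg _))

lemma nlk_neg_log_le {t : ℝ} (ht : 0 < t) : -Real.log t ≤ 2 * t^(-(1/2):ℝ) := by
  have h := Real.log_le_sub_one_of_pos (Real.rpow_pos_of_pos ht (-(1/2)))
  rw [Real.log_rpow ht] at h
  nlinarith [Real.rpow_pos_of_pos ht (-(1/2):ℝ)]

lemma nlk_cos_lb {θ : ℝ} (h0 : 0 ≤ θ) (h2 : θ ≤ 2*π) :
    θ^2*(2*π-θ)^2/(2*π^4) ≤ 1 - Real.cos θ := by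
  have hπ := Real.pi_pos
  rw [div_le_iff₀ (by positivity)]
  rcases le_total θ π with h | h
  · have hc := Real.cos_le_one_sub_mul_cos_sq (x := θ) (by rw [abs_of_nonneg h0]; exact h)
    have hc1 : 2/π^2*θ^2 ≤ 1 - Real.cos θ := by linarith
    have hc2 : 2*θ^2 ≤ (1 - Real.cos θ)*π^2 := by
      rw [show 2/π^2*θ^2 = 2*θ^2/π^2 by ring, div_le_iff₀ (by positivity)] at hc1
      exact hc1
    have hp1 := mul_le_mul_of_nonneg_right hc2 (by positivity : (0:ℝ) ≤ 2*π^2)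
    have hp2 : 0 ≤ θ^2*θ*(4*π-θ) :=
      mul_nonneg (mul_nonneg (sq_nonneg θ) h0) (by linarith)
    nlinarith [hp1, hp2]
  · have hc := Real.cos_le_one_sub_mul_cos_sq (x := 2*π - θ)
      (by rw [abs_of_nonneg (by linarith)]; linarith)
    rw [Real.cos_two_pi_sub] at hc
    have hc1 : 2/π^2*(2*π-θ)^2 ≤ 1 - Real.cos θ := by linarith
    have hc2 : 2*(2*π-θ)^2 ≤ (1 - Real.cos θ)*π^2 := by
      rw [show 2/π^2*(2*π-θ)^2 = 2*(2*π-θ)^2/π^2 by ring, div_le_iff₀ (by positivity)] at hc1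
      exact hc1
    have hp1 := mul_le_mul_of_nonneg_right hc2 (by positivity : (0:ℝ) ≤ 2*π^2)
    have hp2 : 0 ≤ (4*π^2 - θ^2)*(2*π-θ)^2 :=
      mul_nonneg (by nlinarith : (0:ℝ) ≤ 4*π^2 - θ^2) (sq_nonneg _)
    nlinarith [hp1, hp2]

lemma nlk_abs_bound {x : ℝ} (hx : x ∈ Icc (1/2:ℝ) 1) {θ : ℝ} (hθ : θ ∈ Ioo (0:ℝ) (2*π)) :
    |nlkF x θ| ≤ nlkG θ := by
  obtain ⟨hx1, hx2⟩ := hx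
  obtain ⟨ha, hb'⟩ := hθ
  have hb : 0 < 2*π - θ := by linarith
  have hπ := Real.pi_pos
  have hπ3 := Real.pi_gt_three
  have hquad_pos : 0 < θ^2*(2*π-θ)^2/(2*π^4) := by positivity
  have hcos := nlk_cos_lb ha.le hb'.le
  have hv_lb : 1 - Real.cos θ ≤ 1 - 2*x*Real.cos θ + x^2 := by
    nlinarith [Real.cos_le_one θ, sq_nonneg (1-x),
      mul_nonneg (by linarith : (0:ℝ) ≤ 2*x-1) (by nlinarith [Real.cos_le_one θ] : (0:ℝ) ≤ 1 - Real.cos θ)]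
  have hv_ub : 1 - 2*x*Real.cos θ + x^2 ≤ 4 := by
    nlinarith [Real.neg_one_le_cos θ]
  have hv_pos : 0 < 1 - 2*x*Real.cos θ + x^2 := lt_of_lt_of_le (lt_of_lt_of_le hquad_pos hcos) hv_lb
  have hlog_ub : Real.log (1 - 2*x*Real.cos θ + x^2) ≤ Real.log 4 :=
    Real.log_le_log hv_pos hv_ub
  have hlog_lb : Real.log (θ^2*(2*π-θ)^2/(2*π^4)) ≤ Real.log (1 - 2*x*Real.cos θ + x^2) :=
    Real.log_le_log hquad_pos (hcos.trans hv_lb)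
  have hexpand : Real.log (θ^2*(2*π-θ)^2/(2*π^4))
      = 2*Real.log θ + 2*Real.log (2*π-θ) - Real.log (2*π^4) := by
    rw [Real.log_div (by positivity) (by positivity), Real.log_mul (by positivity) (by positivity),
      Real.log_pow, Real.log_pow]
    push_cast; ring
  have hn1 := nlk_neg_log_le ha
  have hn2 := nlk_neg_log_le hb
  have hL : 0 ≤ Real.log (2*π^4) :=
    Real.log_nonneg (by nlinarith [pow_le_pow_left₀ (by norm_num : (0:ℝ) ≤ 3) hπ3.le 4])
  have h4 : 0 ≤ Real.log 4 := Real.log_nonneg (by norm_num)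
  have hr1 : 0 ≤ θ^(-(1/2):ℝ) := Real.rpow_nonneg ha.le _
  have hr2 : 0 ≤ (2*π-θ)^(-(1/2):ℝ) := Real.rpow_nonneg hb.le _
  rw [hexpand] at hlog_lb
  show |Real.log (1 - 2*x*Real.cos θ + x^2)| ≤ nlkG θ
  rw [abs_le]
  unfold nlkG
  constructor <;> nlinarith

lemma nlkG_intInt : IntervalIntegrable nlkG volume 0 (2*π) := by
  have h1 : IntervalIntegrable (fun θ : ℝ => θ^(-(1/2):ℝ)) volume 0 (2*π) :=
    intervalIntegrable_rpow' (by norm_num)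
  have h2 : IntervalIntegrable (fun θ : ℝ => (2*π-θ)^(-(1/2):ℝ)) volume 0 (2*π) := by
    have := (intervalIntegrable_rpow' (a := 0) (b := 2*π) (r := -(1/2)) (by norm_num)).comp_sub_left (2*π)
    simpa using this.symm
  have hc : IntervalIntegrable (fun _ : ℝ => Real.log 4 + Real.log (2*π^4)) volume 0 (2*π) :=
    intervalIntegrable_const
  have := (hc.add (h1.const_mul 4)).add (h2.const_mul 4)
  unfold nlkG
  exact this

lemma nlkF_meas (x : ℝ) : Measurable (nlkF x) := by
  unfold nlkF
  exact Real.measurable_log.comp (by measurability)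

lemma nlk_cos_pos {θ : ℝ} (hθ : θ ∈ Ioo (0:ℝ) (2*π)) : 0 < 1 - Real.cos θ := by
  have h := nlk_cos_lb hθ.1.le hθ.2.le
  have hπ := Real.pi_pos
  have h1 : 0 < θ^2*(2*π-θ)^2/(2*π^4) := by
    have := hθ.1; have h2 : 0 < 2*π - θ := by linarith [hθ.2]
    positivity
  linarith

lemma nlk_ae_Ioo : ∀ᵐ θ ∂(volume : Measure ℝ), θ ∈ Set.uIoc (0:ℝ) (2*π) → θ ∈ Ioo (0:ℝ) (2*π) := by
  have h1 : ∀ᵐ θ ∂(volume : Measure ℝ), θ ≠ 2*π := by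
    rw [ae_iff]
    convert Real.volume_singleton (a := 2*π) using 2
    ext θ; simp
  filter_upwards [h1] with θ hθ hmem
  rw [uIoc_of_le (by positivity : (0:ℝ) ≤ 2*π)] at hmem
  exact ⟨hmem.1, lt_of_le_of_ne hmem.2 hθ⟩

lemma nlkF_one_intInt : IntervalIntegrable (nlkF 1) volume 0 (2*π) := by
  rw [intervalIntegrable_iff]
  have hG : IntegrableOn nlkG (Set.uIoc (0:ℝ) (2*π)) volume :=
    intervalIntegrable_iff.mp nlkG_intInt
  apply hG.integrable.mono ((nlkF_meas 1).aestronglyMeasurable)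
  filter_upwards [ae_restrict_of_ae nlk_ae_Ioo, ae_restrict_mem measurableSet_uIoc]
    with θ h hmem
  have hob := nlk_abs_bound (x := 1) (by norm_num) (h hmem)
  rw [Real.norm_eq_abs, Real.norm_eq_abs]
  exact hob.trans (le_abs_self _)

lemma nlk_one : nlkI 1 = 0 := by
  set xn : ℕ → ℝ := fun n => 1 - 1/((n:ℝ)+2) with hxn
  have hpos : ∀ n : ℕ, 0 < 1/((n:ℝ)+2) := fun n => by positivity
  have hhalf : ∀ n : ℕ, 1/((n:ℝ)+2) ≤ 1/2 := fun n =>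
    one_div_le_one_div_of_le (by norm_num) (by linarith [Nat.cast_nonneg (α := ℝ) n])
  have hmem : ∀ n : ℕ, xn n ∈ Icc (1/2:ℝ) 1 :=
    fun n => ⟨by simp only [hxn]; linarith [hhalf n], by simp only [hxn]; linarith [hpos n]⟩
  have hlim_x : Tendsto xn atTop (𝓝 1) := by
    have h0 : Tendsto (fun n : ℕ => 1/((n:ℝ)+2)) atTop (𝓝 0) := by
      have := tendsto_const_div_atTop_nhds_zero_nat (1:ℝ)
      have h2 := (tendsto_add_atTop_iff_nat 2).2 this
      apply h2.congr
      intro n; push_cast; ring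
    have := tendsto_const_nhds.sub h0 (f := fun _ : ℕ => (1:ℝ))
    rw [hxn]
    simpa using this
  have hDCT : Tendsto (fun n => ∫ θ in (0:ℝ)..(2*π), nlkF (xn n) θ) atTop
      (𝓝 (∫ θ in (0:ℝ)..(2*π), nlkF 1 θ)) := by
    apply intervalIntegral.tendsto_integral_filter_of_dominated_convergence nlkG
    · exact Eventually.of_forall fun n => (nlkF_meas (xn n)).aestronglyMeasurable
    · refine Eventually.of_forall fun n => ?_
      filter_upwards [nlk_ae_Ioo] with θ hae hIι
      rw [Real.norm_eq_abs]
      exact nlk_abs_bound (hmem n) (hae hIι)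
    · exact nlkG_intInt
    · filter_upwards [nlk_ae_Ioo] with θ h hmem
      have hioo := h hmem
      have hcont : ContinuousAt (fun x : ℝ => nlkF x θ) 1 := by
        apply ContinuousAt.comp (g := Real.log)
        · apply Real.continuousAt_log
          have := nlk_cos_pos hioo
          nlinarith [Real.cos_le_one θ]
        · fun_prop
      exact (hcont.tendsto.comp hlim_x)
  have hzero : (fun n => ∫ θ in (0:ℝ)..(2*π), nlkF (xn n) θ) = fun _ => (0:ℝ) := by
    funext n
    have h := mem_Icc.mp (hmem n)
    exact nlk_vanish (le_trans (by norm_num) h.1)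
      (by show (1:ℝ) - 1/((n:ℝ)+2) < 1; linarith [hpos n])
  rw [hzero] at hDCT
  unfold nlkI
  exact tendsto_nhds_unique hDCT tendsto_const_nhds

end NlkAux

/-- Newton's theorem for the logarithmic kernel in two dimensions:
`(1/2) ∫₀^{2π} log(r² + s² − 2rs cos θ) dθ = 2π log(max r s)` for `r, s > 0`. -/
theorem newton_log_kernel (r s : ℝ) (hr : 0 < r) (hs : 0 < s) :
    (1 / 2) * ∫ θ in (0 : ℝ)..(2 * π),
        Real.log (r ^ 2 + s ^ 2 - 2 * r * s * Real.cos θ) =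
      2 * π * Real.log (max r s) := by
  set M := max r s with hM
  set m := min r s with hm
  have hM0 : 0 < M := lt_max_of_lt_left hr
  have hm0 : 0 < m := lt_min hr hs
  have hmM : m ≤ M := min_le_max
  set t := m / M with htdef
  have ht0 : 0 < t := div_pos hm0 hM0
  have ht1 : t ≤ 1 := (div_le_one hM0).mpr hmM
  have hprod : M * m = r * s := max_mul_min r s
  have hsq : M^2 + m^2 = r^2 + s^2 := by
    rcases le_total r s with h | h
    · rw [hM, hm, max_eq_right h, min_eq_left h]; try ring
    · rw [hM, hm, max_eq_left h, min_eq_right h]; try ring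
  have hident : ∀ θ : ℝ, r^2 + s^2 - 2*r*s*Real.cos θ
      = M^2 * (1 - 2*t*Real.cos θ + t^2) := by
    intro θ
    have hexp : M^2 * (1 - 2*t*Real.cos θ + t^2) = M^2 - 2*M*m*Real.cos θ + m^2 := by
      rw [htdef]
      field_simp
      try ring
    rw [hexp]
    linear_combination (-1) * hsq + 2*Real.cos θ * hprod
  have hcongr : (∫ θ in (0:ℝ)..(2*π), Real.log (r^2 + s^2 - 2*r*s*Real.cos θ))
      = ∫ θ in (0:ℝ)..(2*π), (Real.log (M^2) + nlkF t θ) := by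
    apply intervalIntegral.integral_congr_ae
    filter_upwards [nlk_ae_Ioo] with θ h hI
    have hioo := h hI
    have hvpos : 0 < 1 - 2*t*Real.cos θ + t^2 := by
      nlinarith [sq_nonneg (1-t), mul_pos ht0 (nlk_cos_pos hioo)]
    rw [hident θ, Real.log_mul (by positivity) hvpos.ne']
    rfl
  have htint : IntervalIntegrable (nlkF t) MeasureTheory.volume 0 (2*π) := by
    rcases lt_or_eq_of_le ht1 with h | h
    · exact nlk_intInt (by linarith) h 0 (2*π)
    · rw [h]; exact nlkF_one_intInt
  have hIzero : nlkI t = 0 := by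
    rcases lt_or_eq_of_le ht1 with h | h
    · exact nlk_vanish ht0.le h
    · rw [h]; exact nlk_one
  rw [hcongr, intervalIntegral.integral_add (intervalIntegrable_const) htint]
  have : (∫ _ in (0:ℝ)..(2*π), Real.log (M^2)) = (2*π) * Real.log (M^2) := by
    rw [intervalIntegral.integral_const, smul_eq_mul, sub_zero]
  rw [this]
  show (1/2) * ((2*π) * Real.log (M^2) + nlkI t) = 2 * π * Real.log M
  rw [hIzero, Real.log_pow]
  push_cast
  ring
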